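/- arXiv:1507.07349 — 4 statements merged into one kernel-verified Lean document; each statement's English description precedes it below -/
import Mathlib

section
/- Let X be a Fréchet space with increasing generating seminorms (p_i), d the associated translation-invariant metric, and let H and H_i denote the Hausdorff (semi)distances on nonempty closed bounded convex subsets associated with d and p_i respectively. A multifunction Γ: [0,1] → cb(X) is Bochner measurable (i.e., there is a sequence of simple multifunctions Γ_n with H(Γ_n(t),Γ(t)) → 0 for a.e. t) if and only if it is totally measurable (i.e., there is a sequence of simple multifunctions Γ_n such that for every i ∈ ℕ, H_i(Γ_n(t),Γ(t)) → 0 for a.e. t). -/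
open MeasureTheory Set Filter Topology Pointwise

noncomputable section

variable {X : Type*} [AddCommGroup X] [Module ℝ X] [UniformSpace X]
  [IsUniformAddGroup X] [ContinuousSMul ℝ X] [CompleteSpace X]

/-- The translation-invariant metric `d(x,y) = ∑_{i=1}^∞ 2^{-i} p_i(x-y)/(1+p_i(x-y))`
built from the sequence of seminorms (indexed from 1). -/
def frechetDist (p : ℕ → Seminorm ℝ X) (x y : X) : ℝ :=
  ∑' i : ℕ, (p (i + 1) (x - y) / (1 + p (i + 1) (x - y))) / 2 ^ (i + 1)

/-- The excess `e(A,B) = sup_{a ∈ A} inf_{b ∈ B} ρ a b` of `A` over `B`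
with respect to a distance-like function `ρ`. -/
def excess (ρ : X → X → ℝ) (A B : Set X) : ℝ :=
  sSup ((fun a => sInf ((fun b => ρ a b) '' B)) '' A)

/-- Hausdorff (semi)distance associated with a distance-like function. -/
def hDist (ρ : X → X → ℝ) (A B : Set X) : ℝ := max (excess ρ A B) (excess ρ B A)

/-- The (semi)distance associated to a seminorm. -/
def semiDist (q : Seminorm ℝ X) (x y : X) : ℝ := q (x - y)

/-- Membership in `cb(X)`: nonempty closed bounded convex subsets of `X`. -/
def IsCB (A : Set X) : Prop :=
  A.Nonempty ∧ IsClosed A ∧ Bornology.IsVonNBounded ℝ A ∧ Convex ℝ A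

/-- Membership in `ck(X)`: nonempty compact convex subsets of `X`. -/
def IsCK (A : Set X) : Prop := A.Nonempty ∧ IsCompact A ∧ Convex ℝ A

/-- A simple multifunction: finitely many values, each attained on a Lebesgue measurable set. -/
def IsSimpleMF (Γ : ℝ → Set X) : Prop :=
  (Set.range Γ).Finite ∧ ∀ C : Set X, MeasurableSet {t | Γ t = C}

/-- The support function `σ(x*, C) = sup_{x ∈ C} ⟨x*, x⟩`. -/
def suppFn (f : X → ℝ) (C : Set X) : ℝ := sSup (f '' C)

open Classical in
/-- Integral of a simple multifunction: `∫_E Γ = ∑_C μ(E ∩ Γ⁻¹{C}) • C` (Minkowski sum). -/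
def simpleIntegral (Γ : ℝ → Set X) (E : Set ℝ) : Set X :=
  if h : (Set.range Γ).Finite then
    ∑ C ∈ h.toFinset, (volume (E ∩ {t | Γ t = C})).toReal • C
  else ∅

/-- The polar of the unit semiball `U = {x : q x ≤ 1}` inside the topological dual. -/
def polarSet (q : Seminorm ℝ X) : Set (X →L[ℝ] ℝ) := {f | ∀ x : X, q x ≤ 1 → |f x| ≤ 1}


end

noncomputable section

variable {X : Type*} [AddCommGroup X] [Module ℝ X] [UniformSpace X]
  [IsUniformAddGroup X] [ContinuousSMul ℝ X] [CompleteSpace X]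

/-- Lebesgue measure on `[0,1]`. -/
def μ01 : MeasureTheory.Measure ℝ := volume.restrict (Set.Icc 0 1)

/-- Bochner measurability of a multifunction with values satisfying `V`:
a.e. approximation by simple multifunctions in the Hausdorff metric of `frechetDist p`. -/
def BochnerMeasMF (p : ℕ → Seminorm ℝ X) (V : Set X → Prop) (Γ : ℝ → Set X) : Prop :=
  ∃ Γₙ : ℕ → ℝ → Set X, (∀ n, IsSimpleMF (Γₙ n) ∧ ∀ t, V (Γₙ n t)) ∧
    ∀ᵐ t ∂μ01, Tendsto (fun n => hDist (frechetDist p) (Γₙ n t) (Γ t)) atTop (𝓝 0)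

/-- Total measurability: a single sequence of simple multifunctions converging a.e.
in every Hausdorff semimetric `H_i`. -/
def TotallyMeasMF (p : ℕ → Seminorm ℝ X) (V : Set X → Prop) (Γ : ℝ → Set X) : Prop :=
  ∃ Γₙ : ℕ → ℝ → Set X, (∀ n, IsSimpleMF (Γₙ n) ∧ ∀ t, V (Γₙ n t)) ∧
    ∀ i : ℕ, ∀ᵐ t ∂μ01, Tendsto (fun n => hDist (semiDist (p i)) (Γₙ n t) (Γ t)) atTop (𝓝 0)

/-- Measurability by seminorm: for every `i` there is a sequence of simple multifunctions
(depending on `i`) converging a.e. in `H_i`. -/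
def SeminormMeasMF (p : ℕ → Seminorm ℝ X) (V : Set X → Prop) (Γ : ℝ → Set X) : Prop :=
  ∀ i : ℕ, ∃ Γₙ : ℕ → ℝ → Set X, (∀ n, IsSimpleMF (Γₙ n) ∧ ∀ t, V (Γₙ n t)) ∧
    ∀ᵐ t ∂μ01, Tendsto (fun n => hDist (semiDist (p i)) (Γₙ n t) (Γ t)) atTop (𝓝 0)

/-- Pettis integrability in `ck(X)`: the support functions are integrable and over each
measurable `E ⊆ [0,1]` there is a compact convex set whose support function is the
integral of the support functions. -/
def PettisIntegrableCK (Γ : ℝ → Set X) : Prop :=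
  (∀ x' : X →L[ℝ] ℝ, MeasureTheory.IntegrableOn
      (fun t => suppFn (⇑x') (Γ t)) (Set.Icc 0 1) volume) ∧
  ∀ E ⊆ Set.Icc (0:ℝ) 1, MeasurableSet E → ∃ C : Set X, IsCK C ∧
    ∀ x' : X →L[ℝ] ℝ, suppFn (⇑x') C = ∫ t in E, suppFn (⇑x') (Γ t)

/-- `Γ` is integrable with integral assignment `I`: it is totally measurable via a sequence
of `ck(X)`-valued simple multifunctions which is Cauchy in mean for every `H_i`, and for each
measurable `E ⊆ [0,1]` the integrals of the simple multifunctions converge in each `H_i` to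
the compact convex set `I E`. -/
def HasIntegralMF (p : ℕ → Seminorm ℝ X) (Γ : ℝ → Set X) (I : Set ℝ → Set X) : Prop :=
  ∃ Γₙ : ℕ → ℝ → Set X,
    (∀ n, IsSimpleMF (Γₙ n) ∧ ∀ t, IsCK (Γₙ n t)) ∧
    (∀ i : ℕ, ∀ᵐ t ∂μ01,
      Tendsto (fun n => hDist (semiDist (p i)) (Γₙ n t) (Γ t)) atTop (𝓝 0)) ∧
    (∀ i : ℕ, ∀ ε > (0:ℝ), ∃ N, ∀ n ≥ N, ∀ m ≥ N,
      ∫ t in Set.Icc (0:ℝ) 1, hDist (semiDist (p i)) (Γₙ n t) (Γₙ m t) < ε) ∧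
    (∀ E ⊆ Set.Icc (0:ℝ) 1, MeasurableSet E → IsCK (I E) ∧
      ∀ i : ℕ, Tendsto (fun n => hDist (semiDist (p i)) (simpleIntegral (Γₙ n) E) (I E))
        atTop (𝓝 0))

/-- `Γ` is integrable by seminorm (p-integrable) with integral assignment `I`. -/
def HasPIntegralMF (p : ℕ → Seminorm ℝ X) (Γ : ℝ → Set X) (I : Set ℝ → Set X) : Prop :=
  ∀ i : ℕ, ∃ Γₙ : ℕ → ℝ → Set X,
    (∀ n, IsSimpleMF (Γₙ n) ∧ ∀ t, IsCK (Γₙ n t)) ∧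
    (∀ᵐ t ∂μ01, Tendsto (fun n => hDist (semiDist (p i)) (Γₙ n t) (Γ t)) atTop (𝓝 0)) ∧
    (∀ n, MeasureTheory.IntegrableOn
      (fun t => hDist (semiDist (p i)) (Γₙ n t) (Γ t)) (Set.Icc 0 1) volume) ∧
    MeasureTheory.TendstoInMeasure μ01
      (fun n t => hDist (semiDist (p i)) (Γₙ n t) (Γ t)) atTop (fun _ => (0:ℝ)) ∧
    (∀ E ⊆ Set.Icc (0:ℝ) 1, MeasurableSet E →
      Tendsto (fun n => ∫ t in E, hDist (semiDist (p i)) (Γₙ n t) (Γ t)) atTop (𝓝 0) ∧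
      (IsCK (I E) ∧
        Tendsto (fun n => hDist (semiDist (p i)) (simpleIntegral (Γₙ n) E) (I E))
          atTop (𝓝 0)))

end


noncomputable section AuxLemmas

variable {X : Type*} [AddCommGroup X] [Module ℝ X] [UniformSpace X]
  [IsUniformAddGroup X] [ContinuousSMul ℝ X] [CompleteSpace X]

-- φ lemmas
lemma phi_nonneg {a : ℝ} (ha : 0 ≤ a) : 0 ≤ a / (1 + a) :=
  div_nonneg ha (by linarith)

lemma phi_mono {a b : ℝ} (ha : 0 ≤ a) (h : a ≤ b) : a / (1 + a) ≤ b / (1 + b) := by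
  have hb : 0 ≤ b := ha.trans h
  rw [div_le_div_iff₀ (by linarith) (by linarith)]
  nlinarith

lemma phi_le_one {a : ℝ} (ha : 0 ≤ a) : a / (1 + a) ≤ 1 := by
  rw [div_le_one (by linarith)]; linarith

lemma phi_le_self {a : ℝ} (ha : 0 ≤ a) : a / (1 + a) ≤ a := by
  rw [div_le_iff₀ (by linarith)]; nlinarith

lemma phi_pos {a : ℝ} (ha : 0 < a) : 0 < a / (1 + a) :=
  div_pos ha (by linarith)

lemma summable_half : Summable (fun i : ℕ => ((1:ℝ)/2) ^ (i+1)) :=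
  (summable_geometric_two.mul_right ((1:ℝ)/2)).congr fun i => (pow_succ _ _).symm

lemma tsum_half : (∑' i : ℕ, ((1:ℝ)/2) ^ (i+1)) = 1 := by
  have h : ∀ i : ℕ, ((1:ℝ)/2) ^ (i+1) = 1 / 2 / 2 ^ i := by
    intro i; rw [one_div_pow, pow_succ]; ring
  rw [tsum_congr h, tsum_geometric_two' 1]

section FD
variable (p : ℕ → Seminorm ℝ X)

lemma fd_term_nonneg (x y : X) (i : ℕ) :
    0 ≤ (p (i + 1) (x - y) / (1 + p (i + 1) (x - y))) / 2 ^ (i + 1) :=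
  div_nonneg (phi_nonneg (apply_nonneg _ _)) (by positivity)

lemma fd_term_le (x y : X) (i : ℕ) :
    (p (i + 1) (x - y) / (1 + p (i + 1) (x - y))) / 2 ^ (i + 1) ≤ ((1:ℝ)/2) ^ (i+1) := by
  rw [div_pow, one_pow]
  exact (div_le_div_iff_of_pos_right (by positivity)).mpr (phi_le_one (apply_nonneg _ _))

lemma fd_summable (x y : X) :
    Summable (fun i : ℕ => (p (i + 1) (x - y) / (1 + p (i + 1) (x - y))) / 2 ^ (i + 1)) :=
  Summable.of_nonneg_of_le (fd_term_nonneg p x y) (fd_term_le p x y) summable_half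

lemma frechetDist_nonneg (x y : X) : 0 ≤ frechetDist p x y :=
  tsum_nonneg (fd_term_nonneg p x y)

lemma frechetDist_le_one (x y : X) : frechetDist p x y ≤ 1 := by
  calc frechetDist p x y ≤ ∑' i : ℕ, ((1:ℝ)/2) ^ (i+1) :=
        Summable.tsum_le_tsum (fd_term_le p x y) (fd_summable p x y) summable_half
    _ = 1 := tsum_half

lemma phi_le_frechetDist (hpmono : Monotone p) (x y : X) (i : ℕ) :
    (p i (x - y) / (1 + p i (x - y))) / 2 ^ (i + 1) ≤ frechetDist p x y := by
  have h1 : (p i (x - y) / (1 + p i (x - y))) / 2 ^ (i + 1)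
      ≤ (p (i+1) (x - y) / (1 + p (i+1) (x - y))) / 2 ^ (i + 1) := by
    exact (div_le_div_iff_of_pos_right (by positivity)).mpr
      (phi_mono (apply_nonneg _ _) (hpmono (Nat.le_succ i) (x - y)))
  exact h1.trans (Summable.le_tsum (fd_summable p x y) i fun j _ => fd_term_nonneg p x y j)

lemma frechetDist_le (hpmono : Monotone p) (x y : X) (N : ℕ) :
    frechetDist p x y ≤ p N (x - y) + ((1:ℝ)/2) ^ N := by
  set f : ℕ → ℝ := fun i => (p (i + 1) (x - y) / (1 + p (i + 1) (x - y))) / 2 ^ (i + 1) with hf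
  have hsum := fd_summable p x y
  have hsplit : ∑ i ∈ Finset.range N, f i + ∑' i, f (i + N) = ∑' i, f i :=
    Summable.sum_add_tsum_nat_add N hsum
  have h1 : ∑ i ∈ Finset.range N, f i ≤ p N (x - y) := by
    calc ∑ i ∈ Finset.range N, f i
        ≤ ∑ i ∈ Finset.range N, p N (x - y) * ((1:ℝ)/2) ^ (i+1) := by
          apply Finset.sum_le_sum
          intro i hi
          have hiN : i + 1 ≤ N := Finset.mem_range.mp hi
          have : p (i+1) (x - y) / (1 + p (i+1) (x - y)) ≤ p N (x - y) :=
            (phi_le_self (apply_nonneg _ _)).trans (hpmono hiN (x - y))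
          rw [hf]
          calc (p (i + 1) (x - y) / (1 + p (i + 1) (x - y))) / 2 ^ (i + 1)
              ≤ p N (x - y) / 2 ^ (i+1) :=
                (div_le_div_iff_of_pos_right (by positivity)).mpr this
            _ = p N (x - y) * ((1:ℝ)/2) ^ (i+1) := by
                rw [div_pow, one_pow, mul_one_div]
      _ = p N (x - y) * ∑ i ∈ Finset.range N, ((1:ℝ)/2) ^ (i+1) := by
          rw [Finset.mul_sum]
      _ ≤ p N (x - y) * 1 := by
          apply mul_le_mul_of_nonneg_left _ (apply_nonneg _ _)
          calc ∑ i ∈ Finset.range N, ((1:ℝ)/2) ^ (i+1)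
              ≤ ∑' i : ℕ, ((1:ℝ)/2) ^ (i+1) :=
                Summable.sum_le_tsum _ (fun i _ => by positivity) summable_half
            _ = 1 := tsum_half
      _ = p N (x - y) := mul_one _
  have h2 : ∑' i, f (i + N) ≤ ((1:ℝ)/2) ^ N := by
    have hsum2 : Summable (fun i : ℕ => f (i + N)) := hsum.comp_injective (add_left_injective N)
    calc ∑' i, f (i + N) ≤ ∑' i : ℕ, ((1:ℝ)/2) ^ N * ((1:ℝ)/2) ^ (i+1) := by
          apply Summable.tsum_le_tsum _ hsum2 (summable_half.mul_left _)
          intro i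
          calc f (i + N) ≤ ((1:ℝ)/2) ^ (i + N + 1) := fd_term_le p x y (i + N)
            _ = ((1:ℝ)/2) ^ N * ((1:ℝ)/2) ^ (i+1) := by ring
      _ = ((1:ℝ)/2) ^ N * 1 := by rw [tsum_mul_left, tsum_half]
      _ = ((1:ℝ)/2) ^ N := mul_one _
  have : frechetDist p x y = ∑' i, f i := rfl
  linarith [hsplit]

end FD

-- excess basics
lemma inf_img_nonneg {ρ : X → X → ℝ} (hρ : ∀ x y, 0 ≤ ρ x y) (a : X) (B : Set X) :
    0 ≤ sInf ((fun b => ρ a b) '' B) :=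
  Real.sInf_nonneg (by rintro x ⟨b, -, rfl⟩; exact hρ a b)

lemma excess_nonneg {ρ : X → X → ℝ} (hρ : ∀ x y, 0 ≤ ρ x y) (A B : Set X) :
    0 ≤ excess ρ A B :=
  Real.sSup_nonneg (by rintro x ⟨a, -, rfl⟩; exact inf_img_nonneg hρ a B)

lemma hDist_nonneg {ρ : X → X → ℝ} (hρ : ∀ x y, 0 ≤ ρ x y) (A B : Set X) :
    0 ≤ hDist ρ A B :=
  le_max_of_le_left (excess_nonneg hρ A B)

lemma semiDist_nonneg (q : Seminorm ℝ X) : ∀ x y : X, 0 ≤ semiDist q x y :=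
  fun x y => apply_nonneg q (x - y)

-- direction 1 core
lemma excess_semi_le {p : ℕ → Seminorm ℝ X} (hpmono : Monotone p) {A B : Set X}
    (hA : A.Nonempty) (hB : B.Nonempty) (i : ℕ) {ε : ℝ} (hε : 0 < ε)
    (h : excess (frechetDist p) A B < (ε / (1 + ε)) / 2 ^ (i + 1)) :
    excess (semiDist (p i)) A B ≤ ε := by
  apply Real.sSup_le _ hε.le
  rintro x ⟨a, haA, rfl⟩
  set s := sInf ((fun b => semiDist (p i) a b) '' B) with hs
  have hs0 : 0 ≤ s := inf_img_nonneg (semiDist_nonneg _) a B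
  -- φ(s)/2^(i+1) ≤ sInf dimg
  have hkey : (s / (1 + s)) / 2 ^ (i + 1) ≤ sInf ((fun b => frechetDist p a b) '' B) := by
    apply le_csInf (hB.image _)
    rintro x ⟨b, hbB, rfl⟩
    have hlb : BddBelow ((fun b => semiDist (p i) a b) '' B) :=
      ⟨0, by rintro y ⟨b', -, rfl⟩; exact semiDist_nonneg _ a b'⟩
    have h1 : s ≤ p i (a - b) := csInf_le hlb ⟨b, hbB, rfl⟩
    calc (s / (1 + s)) / 2 ^ (i + 1)
        ≤ (p i (a - b) / (1 + p i (a - b))) / 2 ^ (i + 1) := by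
          exact (div_le_div_iff_of_pos_right (by positivity)).mpr (phi_mono hs0 h1)
      _ ≤ frechetDist p a b := phi_le_frechetDist p hpmono a b i
  have hbdd : BddAbove ((fun a => sInf ((fun b => frechetDist p a b) '' B)) '' A) := by
    refine ⟨1, ?_⟩
    rintro x ⟨a', -, rfl⟩
    obtain ⟨b0, hb0⟩ := hB
    have hlb : BddBelow ((fun b => frechetDist p a' b) '' B) :=
      ⟨0, by rintro y ⟨b', -, rfl⟩; exact frechetDist_nonneg p a' b'⟩
    exact (csInf_le hlb ⟨b0, hb0, rfl⟩).trans (frechetDist_le_one p a' b0)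
  have hle : sInf ((fun b => frechetDist p a b) '' B) ≤ excess (frechetDist p) A B :=
    le_csSup hbdd ⟨a, haA, rfl⟩
  have hφ : s / (1 + s) < ε / (1 + ε) := by
    have := (hkey.trans hle).trans_lt h
    have h2 : (0:ℝ) < 2 ^ (i+1) := by positivity
    exact (div_lt_div_iff_of_pos_right h2).mp this
  by_contra hcon
  push_neg at hcon
  exact absurd (phi_mono hε.le hcon.le) (not_le.mpr hφ)


-- direction 2 core
lemma excess_fd_le {p : ℕ → Seminorm ℝ X} (hpmono : Monotone p) {A B : Set X}
    (hA : A.Nonempty) (hB : B.Nonempty) (N : ℕ)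
    (hAb : ∃ r, ∀ x ∈ A, p N x ≤ r) (hBb : ∃ r, ∀ x ∈ B, p N x ≤ r) :
    excess (frechetDist p) A B ≤ excess (semiDist (p N)) A B + ((1:ℝ)/2) ^ N := by
  obtain ⟨rA, hrA⟩ := hAb
  obtain ⟨rB, hrB⟩ := hBb
  obtain ⟨b0, hb0⟩ := hB
  have hbddP : BddAbove ((fun a => sInf ((fun b => semiDist (p N) a b) '' B)) '' A) := by
    refine ⟨rA + rB, ?_⟩
    rintro x ⟨a', ha', rfl⟩
    have hlb : BddBelow ((fun b => semiDist (p N) a' b) '' B) :=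
      ⟨0, by rintro y ⟨b', -, rfl⟩; exact semiDist_nonneg _ a' b'⟩
    refine (csInf_le hlb ⟨b0, hb0, rfl⟩).trans ?_
    calc semiDist (p N) a' b0 ≤ p N a' + p N b0 := map_sub_le_add _ _ _
      _ ≤ rA + rB := add_le_add (hrA a' ha') (hrB b0 hb0)
  apply Real.sSup_le
  · rintro x ⟨a, haA, rfl⟩
    have hinf : sInf ((fun b => frechetDist p a b) '' B)
        ≤ sInf ((fun b => semiDist (p N) a b) '' B) + ((1:ℝ)/2) ^ N := by
      have hlbd : BddBelow ((fun b => frechetDist p a b) '' B) :=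
        ⟨0, by rintro y ⟨b', -, rfl⟩; exact frechetDist_nonneg p a b'⟩
      have : sInf ((fun b => frechetDist p a b) '' B) - ((1:ℝ)/2) ^ N
          ≤ sInf ((fun b => semiDist (p N) a b) '' B) := by
        apply le_csInf (Set.Nonempty.image _ ⟨b0, hb0⟩)
        rintro x ⟨b, hbB, rfl⟩
        have h1 : sInf ((fun b => frechetDist p a b) '' B) ≤ frechetDist p a b :=
          csInf_le hlbd ⟨b, hbB, rfl⟩
        have h2 := frechetDist_le p hpmono a b N
        simp only [semiDist]
        linarith
      linarith
    refine hinf.trans (add_le_add_left ?_ _)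
    exact le_csSup hbddP ⟨a, haA, rfl⟩
  · have := excess_nonneg (semiDist_nonneg (p N)) A B
    positivity

lemma hDist_semi_le {p : ℕ → Seminorm ℝ X} (hpmono : Monotone p) {A B : Set X}
    (hA : A.Nonempty) (hB : B.Nonempty) (i : ℕ) {ε : ℝ} (hε : 0 < ε)
    (h : hDist (frechetDist p) A B < (ε / (1 + ε)) / 2 ^ (i + 1)) :
    hDist (semiDist (p i)) A B ≤ ε :=
  max_le (excess_semi_le hpmono hA hB i hε ((le_max_left _ _).trans_lt h))
    (excess_semi_le hpmono hB hA i hε ((le_max_right _ _).trans_lt h))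

lemma hDist_fd_le {p : ℕ → Seminorm ℝ X} (hpmono : Monotone p) {A B : Set X}
    (hA : A.Nonempty) (hB : B.Nonempty) (N : ℕ)
    (hAb : ∃ r, ∀ x ∈ A, p N x ≤ r) (hBb : ∃ r, ∀ x ∈ B, p N x ≤ r) :
    hDist (frechetDist p) A B ≤ hDist (semiDist (p N)) A B + ((1:ℝ)/2) ^ N :=
  max_le ((excess_fd_le hpmono hA hB N hAb hBb).trans
      (add_le_add_left (le_max_left _ _) _))
    ((excess_fd_le hpmono hB hA N hBb hAb).trans
      (add_le_add_left (le_max_right _ _) _))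

end AuxLemmas

/-- a `cb(X)`-valued multifunction on `[0,1]` is Bochner measurable iff it is
totally measurable. -/
theorem stmt4 {X : Type*} [AddCommGroup X] [Module ℝ X] [UniformSpace X]
    [IsUniformAddGroup X] [ContinuousSMul ℝ X] [CompleteSpace X]
    (p : ℕ → Seminorm ℝ X) (hp : WithSeminorms p) (hpmono : Monotone p)
    (Γ : ℝ → Set X) (hΓ : ∀ t ∈ Set.Icc (0:ℝ) 1, IsCB (Γ t)) :
    BochnerMeasMF p IsCB Γ ↔ TotallyMeasMF p IsCB Γ := by
  have hmem : ∀ᵐ t ∂μ01, t ∈ Set.Icc (0:ℝ) 1 := by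
    unfold μ01; exact MeasureTheory.ae_restrict_mem measurableSet_Icc
  constructor
  · rintro ⟨Γₙ, hsimp, hae⟩
    refine ⟨Γₙ, hsimp, fun i => ?_⟩
    filter_upwards [hae, hmem] with t ht htI
    have hΓt : (Γ t).Nonempty := (hΓ t htI).1
    have hΓn : ∀ n, (Γₙ n t).Nonempty := fun n => ((hsimp n).2 t).1
    rw [Metric.tendsto_atTop] at ht ⊢
    intro ε hε
    have hδ : 0 < ((ε/2) / (1 + ε/2)) / 2 ^ (i + 1) := by positivity
    obtain ⟨N, hN⟩ := ht _ hδ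
    refine ⟨N, fun n hn => ?_⟩
    have h1 := hN n hn
    rw [Real.dist_eq, sub_zero,
      abs_of_nonneg (hDist_nonneg (fun x y => frechetDist_nonneg p x y) _ _)] at h1
    have h2 : hDist (semiDist (p i)) (Γₙ n t) (Γ t) ≤ ε/2 :=
      hDist_semi_le hpmono (hΓn n) hΓt i (by linarith) h1
    rw [Real.dist_eq, sub_zero, abs_of_nonneg (hDist_nonneg (semiDist_nonneg _) _ _)]
    linarith
  · rintro ⟨Γₙ, hsimp, hae⟩
    refine ⟨Γₙ, hsimp, ?_⟩
    have hae' : ∀ᵐ t ∂μ01, ∀ i : ℕ,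
        Tendsto (fun n => hDist (semiDist (p i)) (Γₙ n t) (Γ t)) atTop (𝓝 0) :=
      (MeasureTheory.ae_all_iff).2 hae
    filter_upwards [hae', hmem] with t ht htI
    have hΓt : (Γ t).Nonempty := (hΓ t htI).1
    have hΓn : ∀ n, (Γₙ n t).Nonempty := fun n => ((hsimp n).2 t).1
    rw [Metric.tendsto_atTop]
    intro ε hε
    obtain ⟨N, hN⟩ := exists_pow_lt_of_lt_one (show (0:ℝ) < ε/2 by linarith)
      (by norm_num : (1:ℝ)/2 < 1)
    obtain ⟨M, hM⟩ := Metric.tendsto_atTop.mp (ht N) (ε/2) (by linarith)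
    refine ⟨M, fun n hn => ?_⟩
    have h1 := hM n hn
    rw [Real.dist_eq, sub_zero, abs_of_nonneg (hDist_nonneg (semiDist_nonneg _) _ _)] at h1
    have hbA : ∃ r, ∀ x ∈ Γₙ n t, p N x ≤ r := by
      obtain ⟨r, -, hr⟩ :=
        (hp.isVonNBounded_iff_seminorm_bounded.mp ((hsimp n).2 t).2.2.1) N
      exact ⟨r, fun x hx => (hr x hx).le⟩
    have hbB : ∃ r, ∀ x ∈ Γ t, p N x ≤ r := by
      obtain ⟨r, -, hr⟩ := (hp.isVonNBounded_iff_seminorm_bounded.mp (hΓ t htI).2.2.1) N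
      exact ⟨r, fun x hx => (hr x hx).le⟩
    have h2 := hDist_fd_le hpmono (hΓn n) hΓt N hbA hbB
    rw [Real.dist_eq, sub_zero,
      abs_of_nonneg (hDist_nonneg (fun x y => frechetDist_nonneg p x y) _ _)]
    linarith
end

section
/- Let X be a Fréchet space, Γ: [0,1] → ck(X) Pettis integrable in ck(X), and G: [0,1] → ck(X) scalarly measurable with G(t) ⊆ Γ(t) for all t ∈ [0,1]. Then G is Pettis integrable in ck(X). -/
open MeasureTheory Set Filter Topology Pointwise

section Aux

open Set

lemma le_suppFn {X : Type*} [TopologicalSpace X] {f : X → ℝ} (hf : Continuous f)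
    {C : Set X} (hC : IsCompact C) {x : X} (hx : x ∈ C) : f x ≤ suppFn f C :=
  le_csSup (hC.image hf).bddAbove ⟨x, hx, rfl⟩

lemma suppFn_le {X : Type*} {f : X → ℝ} {C : Set X} (hne : C.Nonempty) {M : ℝ}
    (h : ∀ x ∈ C, f x ≤ M) : suppFn f C ≤ M :=
  csSup_le (hne.image f) (by rintro _ ⟨x, hx, rfl⟩; exact h x hx)

lemma suppFn_mono {X : Type*} [TopologicalSpace X] {f : X → ℝ} (hf : Continuous f)
    {C D : Set X} (hC : C.Nonempty) (hD : IsCompact D) (h : C ⊆ D) :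
    suppFn f C ≤ suppFn f D :=
  suppFn_le hC fun x hx => le_suppFn hf hD (h hx)

lemma suppFn_zero {X : Type*} {C : Set X} (hne : C.Nonempty) :
    suppFn (fun _ => (0:ℝ)) C = 0 := by
  unfold suppFn
  rw [Set.Nonempty.image_const hne 0, csSup_singleton]

lemma suppFn_smul {X : Type*} [TopologicalSpace X] [AddCommGroup X] [Module ℝ X]
    [IsTopologicalAddGroup X] [ContinuousSMul ℝ X]
    {x' : X →L[ℝ] ℝ} {C : Set X} (hC : IsCompact C) (hne : C.Nonempty)
    {c : ℝ} (hc : 0 < c) : suppFn (⇑(c • x')) C = c * suppFn (⇑x') C := by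
  obtain ⟨x0, hx0, hmax⟩ := hC.exists_isMaxOn hne x'.continuous.continuousOn
  have h1 : suppFn (⇑x') C = x' x0 :=
    le_antisymm (suppFn_le hne fun y hy => hmax hy) (le_suppFn x'.continuous hC hx0)
  have h2 : suppFn (⇑(c • x')) C = c * x' x0 := by
    refine le_antisymm (suppFn_le hne fun y hy => ?_) ?_
    · simp only [ContinuousLinearMap.smul_apply, smul_eq_mul]
      exact mul_le_mul_of_nonneg_left (hmax hy) hc.le
    · have := le_suppFn (c • x').continuous hC hx0
      simpa using this
  rw [h1, h2]

/-- Representation: a linear functional on the dual dominated by the support function of a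
compact convex set is evaluation at a point of that set. -/
lemma rep_lemma {X : Type*} [AddCommGroup X] [Module ℝ X] [TopologicalSpace X]
    [IsTopologicalAddGroup X] [ContinuousSMul ℝ X]
    {D : Set X} (hDne : D.Nonempty) (hDcp : IsCompact D) (hDconv : Convex ℝ D)
    (g : (X →L[ℝ] ℝ) →ₗ[ℝ] ℝ) (hg : ∀ y' : X →L[ℝ] ℝ, g y' ≤ suppFn (⇑y') D) :
    ∃ x ∈ D, ∀ y' : X →L[ℝ] ℝ, y' x = g y' := by
  classical
  have key : ∀ u : Finset (X →L[ℝ] ℝ),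
      (D ∩ ⋂ y' ∈ u, {x | y' x = g y'}).Nonempty := by
    intro u
    set T : X → (↥u → ℝ) := fun x i => i.1 x with hT
    have hTcont : Continuous T := continuous_pi fun i => i.1.continuous
    have hKcp : IsCompact (T '' D) := hDcp.image hTcont
    have hKconv : Convex ℝ (T '' D) :=
      hDconv.linear_image (LinearMap.pi fun i : ↥u => ((i.1 : X →L[ℝ] ℝ) : X →ₗ[ℝ] ℝ))
    set v : ↥u → ℝ := fun i => g i.1 with hv
    by_cases hvK : v ∈ T '' D
    · obtain ⟨x, hxD, hTx⟩ := hvK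
      refine ⟨x, hxD, ?_⟩
      rw [Set.mem_iInter₂]
      intro y' hy'
      exact congrFun hTx ⟨y', hy'⟩
    · exfalso
      obtain ⟨lf, u0, hvu, hK⟩ :=
        geometric_hahn_banach_point_closed hKconv hKcp.isClosed hvK
      set c : ↥u → ℝ := fun i => lf (fun j => if i = j then 1 else 0) with hc
      have hlf : ∀ w : ↥u → ℝ, lf w = ∑ i, w i * c i := by
        intro w
        have := LinearMap.pi_apply_eq_sum_univ (lf : (↥u → ℝ) →ₗ[ℝ] ℝ) w
        simpa [smul_eq_mul, hc] using this
      set y' : X →L[ℝ] ℝ := ∑ i : ↥u, c i • (i.1 : X →L[ℝ] ℝ) with hy'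
      have hy'x : ∀ x : X, y' x = lf (T x) := by
        intro x
        rw [hlf]
        simp only [hy', ContinuousLinearMap.sum_apply, ContinuousLinearMap.smul_apply,
          smul_eq_mul, hT]
        exact Finset.sum_congr rfl fun i _ => mul_comm _ _
      have hgy' : g y' = lf v := by
        rw [hlf]
        simp only [hy', map_sum, LinearMap.map_smul, smul_eq_mul, hv]
        exact Finset.sum_congr rfl fun i _ => mul_comm _ _
      obtain ⟨x0, hx0D, hmax⟩ := hDcp.exists_isMaxOn hDne (-y').continuous.continuousOn
      have h1 : g (-y') ≤ suppFn (⇑(-y')) D := hg _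
      have h2 : suppFn (⇑(-y')) D = (-y') x0 :=
        le_antisymm (suppFn_le hDne fun z hz => hmax hz) (le_suppFn (-y').continuous hDcp hx0D)
      have h3 : lf (T x0) ≤ lf v := by
        rw [h2] at h1
        have e1 : (-y') x0 = -(lf (T x0)) := by
          rw [ContinuousLinearMap.neg_apply, hy'x]
        have e2 : g (-y') = -(lf v) := by rw [map_neg, hgy']
        rw [e1, e2] at h1
        linarith
      have h4 : u0 < lf (T x0) := hK _ ⟨x0, hx0D, rfl⟩
      linarith
  obtain ⟨x, hx⟩ := hDcp.inter_iInter_nonempty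
    (fun y' : X →L[ℝ] ℝ => {x | y' x = g y'})
    (fun y' => isClosed_eq y'.continuous continuous_const) key
  exact ⟨x, hx.1, fun y' => Set.mem_iInter.1 hx.2 y'⟩

end Aux

/-- if `Γ : [0,1] → ck(X)` is Pettis integrable in `ck(X)` and
`G : [0,1] → ck(X)` is scalarly measurable with `G t ⊆ Γ t` for all `t`, then `G` is
Pettis integrable in `ck(X)`. -/
theorem stmt13 {X : Type*} [AddCommGroup X] [Module ℝ X] [UniformSpace X]
    [IsUniformAddGroup X] [ContinuousSMul ℝ X] [CompleteSpace X]
    (p : ℕ → Seminorm ℝ X) (hp : WithSeminorms p) (hpmono : Monotone p)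
    (Γ : ℝ → Set X) (hΓ : ∀ t ∈ Set.Icc (0:ℝ) 1, IsCK (Γ t))
    (hΓpet : PettisIntegrableCK Γ)
    (G : ℝ → Set X) (hG : ∀ t ∈ Set.Icc (0:ℝ) 1, IsCK (G t))
    (hGscal : ∀ x' : X →L[ℝ] ℝ, AEMeasurable (fun t => suppFn (⇑x') (G t)) μ01)
    (hsub : ∀ t ∈ Set.Icc (0:ℝ) 1, G t ⊆ Γ t) :
    PettisIntegrableCK G := by
  classical
  -- Part 1: integrability of the support functions of G
  have hint : ∀ x' : X →L[ℝ] ℝ,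
      MeasureTheory.IntegrableOn (fun t => suppFn (⇑x') (G t)) (Set.Icc 0 1) volume := by
    intro x'
    have hmeas : AEStronglyMeasurable (fun t => suppFn (⇑x') (G t))
        (volume.restrict (Set.Icc (0:ℝ) 1)) := (hGscal x').aestronglyMeasurable
    refine ((hΓpet.1 x').abs.add (hΓpet.1 (-x')).abs).mono' hmeas ?_
    filter_upwards [MeasureTheory.ae_restrict_mem measurableSet_Icc] with t ht
    obtain ⟨hGne, hGcp, -⟩ := hG t ht
    obtain ⟨hΓne, hΓcp, -⟩ := hΓ t ht
    obtain ⟨x0, hx0⟩ := hGne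
    have hsubt := hsub t ht
    have hup : suppFn (⇑x') (G t) ≤ suppFn (⇑x') (Γ t) :=
      suppFn_mono x'.continuous ⟨x0, hx0⟩ hΓcp hsubt
    have hlow : -(suppFn (⇑(-x')) (Γ t)) ≤ suppFn (⇑x') (G t) := by
      have h1 : x' x0 ≤ suppFn (⇑x') (G t) := le_suppFn x'.continuous hGcp hx0
      have h2 : (-x') x0 ≤ suppFn (⇑(-x')) (Γ t) :=
        le_suppFn (-x').continuous hΓcp (hsubt hx0)
      rw [ContinuousLinearMap.neg_apply] at h2
      linarith
    rw [Real.norm_eq_abs, abs_le, Pi.add_apply]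
    have a1 := le_abs_self (suppFn (⇑(-x')) (Γ t))
    have a2 := le_abs_self (suppFn (⇑x') (Γ t))
    have a3 := abs_nonneg (suppFn (⇑(-x')) (Γ t))
    have a4 := abs_nonneg (suppFn (⇑x') (Γ t))
    constructor <;> linarith
  refine ⟨hint, ?_⟩
  -- Part 2: existence of the integral set
  intro E hE hEm
  obtain ⟨D, ⟨hDne, hDcp, hDconv⟩, hDsupp⟩ := hΓpet.2 E hE hEm
  set φ : (X →L[ℝ] ℝ) → ℝ := fun x' => ∫ t in E, suppFn (⇑x') (G t) with hφ
  have hGint : ∀ x' : X →L[ℝ] ℝ,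
      MeasureTheory.IntegrableOn (fun t => suppFn (⇑x') (G t)) E volume :=
    fun x' => (hint x').mono_set hE
  have hΓint : ∀ x' : X →L[ℝ] ℝ,
      MeasureTheory.IntegrableOn (fun t => suppFn (⇑x') (Γ t)) E volume :=
    fun x' => (hΓpet.1 x').mono_set hE
  -- φ is dominated by the support function of D
  have hφD : ∀ y' : X →L[ℝ] ℝ, φ y' ≤ suppFn (⇑y') D := by
    intro y'
    rw [hDsupp y']
    refine MeasureTheory.setIntegral_mono_on (hGint y') (hΓint y') hEm ?_
    intro t ht
    have ht' := hE ht
    obtain ⟨hGne, -, -⟩ := hG t ht'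
    obtain ⟨-, hΓcp, -⟩ := hΓ t ht'
    exact suppFn_mono y'.continuous hGne hΓcp (hsub t ht')
  -- φ is subadditive
  have hφadd : ∀ x' y' : X →L[ℝ] ℝ, φ (x' + y') ≤ φ x' + φ y' := by
    intro x' y'
    have hpt : ∀ t ∈ E, suppFn (⇑(x' + y')) (G t)
        ≤ suppFn (⇑x') (G t) + suppFn (⇑y') (G t) := by
      intro t ht
      have ht' := hE ht
      obtain ⟨hGne, hGcp, -⟩ := hG t ht'
      refine suppFn_le hGne fun x hx => ?_
      have h1 : x' x ≤ suppFn (⇑x') (G t) := le_suppFn x'.continuous hGcp hx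
      have h2 : y' x ≤ suppFn (⇑y') (G t) := le_suppFn y'.continuous hGcp hx
      rw [ContinuousLinearMap.add_apply]
      linarith
    calc φ (x' + y') ≤ ∫ t in E, (suppFn (⇑x') (G t) + suppFn (⇑y') (G t)) :=
          MeasureTheory.setIntegral_mono_on (hGint _) ((hGint x').add (hGint y')) hEm hpt
      _ = φ x' + φ y' := MeasureTheory.integral_add (hGint x') (hGint y')
  -- φ is positively homogeneous
  have hφsmul : ∀ c : ℝ, 0 < c → ∀ x' : X →L[ℝ] ℝ, φ (c • x') = c * φ x' := by
    intro c hc x'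
    have hpt : Set.EqOn (fun t => suppFn (⇑(c • x')) (G t))
        (fun t => c * suppFn (⇑x') (G t)) E := by
      intro t ht
      have ht' := hE ht
      obtain ⟨hGne, hGcp, -⟩ := hG t ht'
      exact suppFn_smul hGcp hGne hc
    rw [hφ]
    simp only []
    rw [MeasureTheory.setIntegral_congr_fun hEm hpt, MeasureTheory.integral_const_mul]
  have hφzero : φ 0 = 0 := by
    have hpt : Set.EqOn (fun t => suppFn (⇑(0 : X →L[ℝ] ℝ)) (G t))
        (fun _ => (0:ℝ)) E := by
      intro t ht
      obtain ⟨hGne, -, -⟩ := hG t (hE ht)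
      have : (⇑(0 : X →L[ℝ] ℝ)) = fun _ : X => (0:ℝ) := by
        ext x; simp
      rw [this]
      exact suppFn_zero hGne
    rw [hφ]
    simp only []
    rw [MeasureTheory.setIntegral_congr_fun hEm hpt, MeasureTheory.integral_zero]
  -- Key claim via Hahn-Banach and the representation lemma
  have claim : ∀ x'₀ : X →L[ℝ] ℝ, ∃ x, x ∈ D ∧ (∀ y' : X →L[ℝ] ℝ, y' x ≤ φ y')
      ∧ x'₀ x = φ x'₀ := by
    intro x'₀
    have H : ∀ c : ℝ, c • x'₀ = 0 → c • φ x'₀ = 0 := by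
      intro c hc
      by_cases h : x'₀ = 0
      · rw [h, hφzero, smul_zero]
      · have hc0 : c = 0 := by
          by_contra hcne
          apply h
          have h2 := congrArg (fun z : X →L[ℝ] ℝ => c⁻¹ • z) hc
          simpa [smul_smul, inv_mul_cancel₀ hcne] using h2
        rw [hc0, zero_smul]
    set f := LinearPMap.mkSpanSingleton' (σ := RingHom.id ℝ) x'₀ (φ x'₀) H with hf
    have hfle : ∀ z : f.domain, f z ≤ φ z := by
      rintro ⟨z, hz⟩
      have hz' : z ∈ Submodule.span ℝ {x'₀} := by
        rwa [hf, LinearPMap.domain_mkSpanSingleton] at hz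
      obtain ⟨c, rfl⟩ := Submodule.mem_span_singleton.1 hz'
      have happ : f ⟨c • x'₀, hz⟩ = c • φ x'₀ :=
        LinearPMap.mkSpanSingleton'_apply x'₀ (φ x'₀) H c hz
      rw [happ]
      show c • φ x'₀ ≤ φ (c • x'₀)
      rcases lt_trichotomy c 0 with hneg | hzero | hpos
      · have h1 : φ (c • x'₀ + (-c) • x'₀) ≤ φ (c • x'₀) + φ ((-c) • x'₀) := hφadd _ _
        have h2 : c • x'₀ + (-c) • x'₀ = 0 := by
          rw [← add_smul]; simp
        have h3 : φ ((-c) • x'₀) = (-c) * φ x'₀ := hφsmul (-c) (by linarith) x'₀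
        rw [h2, hφzero, h3] at h1
        simp only [smul_eq_mul]
        linarith
      · rw [hzero, zero_smul, zero_smul, hφzero]
      · rw [hφsmul c hpos x'₀, smul_eq_mul]
    obtain ⟨g, hgeq, hgle⟩ := exists_extension_of_le_sublinear f φ hφsmul hφadd hfle
    have hg0 : g x'₀ = φ x'₀ := by
      have hmem : x'₀ ∈ f.domain := by
        rw [hf, LinearPMap.domain_mkSpanSingleton]
        exact Submodule.mem_span_singleton_self _
      have h1 := hgeq ⟨x'₀, hmem⟩
      rw [LinearPMap.mkSpanSingleton'_apply_self] at h1
      exact h1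
    obtain ⟨x, hxD, hxeq⟩ := rep_lemma hDne hDcp hDconv g
      (fun y' => (hgle y').trans (hφD y'))
    refine ⟨x, hxD, fun y' => ?_, ?_⟩
    · rw [hxeq y']; exact hgle y'
    · rw [hxeq x'₀]; exact hg0
  -- Define the candidate set
  set C : Set X := D ∩ ⋂ y' : X →L[ℝ] ℝ, {x | y' x ≤ φ y'} with hC
  have hmemC : ∀ x, x ∈ C ↔ x ∈ D ∧ ∀ y' : X →L[ℝ] ℝ, y' x ≤ φ y' := by
    intro x
    rw [hC, Set.mem_inter_iff, Set.mem_iInter]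
    rfl
  obtain ⟨x₁, hx₁D, hx₁le, -⟩ := claim 0
  have hCne : C.Nonempty := ⟨x₁, (hmemC x₁).2 ⟨hx₁D, hx₁le⟩⟩
  have hCcp : IsCompact C :=
    hDcp.inter_right (isClosed_iInter fun y' =>
      isClosed_le y'.continuous continuous_const)
  have hCconv : Convex ℝ C :=
    hDconv.inter (convex_iInter fun y' =>
      convex_halfSpace_le ⟨y'.map_add, y'.map_smul⟩ _)
  refine ⟨C, ⟨hCne, hCcp, hCconv⟩, ?_⟩
  intro x'
  refine le_antisymm (suppFn_le hCne fun x hx => ((hmemC x).1 hx).2 x') ?_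
  obtain ⟨x, hxD, hxle, hxeq⟩ := claim x'
  have hxC : x ∈ C := (hmemC x).2 ⟨hxD, hxle⟩
  calc (∫ t in E, suppFn (⇑x') (G t)) = x' x := hxeq.symm
    _ ≤ suppFn (⇑x') C := le_suppFn x'.continuous hCcp hxC
end

section
/- Let X be a Fréchet space and Γ: [0,1] → ck(X) Pettis integrable in ck(X). Then every scalarly measurable selection f of Γ (f(t) ∈ Γ(t) a.e.) is Pettis integrable. -/
open MeasureTheory Set Filter Topology Pointwise

/-- every scalarly measurable selection of a multifunction that is Pettis
integrable in `ck(X)` is Pettis integrable. -/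
theorem stmt14 {X : Type*} [AddCommGroup X] [Module ℝ X] [UniformSpace X]
    [IsUniformAddGroup X] [ContinuousSMul ℝ X] [CompleteSpace X]
    (p : ℕ → Seminorm ℝ X) (hp : WithSeminorms p) (hpmono : Monotone p)
    (Γ : ℝ → Set X) (hΓ : ∀ t ∈ Set.Icc (0:ℝ) 1, IsCK (Γ t))
    (hΓpet : PettisIntegrableCK Γ)
    (f : ℝ → X) (hsel : ∀ᵐ t ∂μ01, f t ∈ Γ t)
    (hscal : ∀ x' : X →L[ℝ] ℝ, AEMeasurable (fun t => x' (f t)) μ01) :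
    (∀ x' : X →L[ℝ] ℝ, MeasureTheory.IntegrableOn
        (fun t => x' (f t)) (Set.Icc 0 1) volume) ∧
    ∀ E ⊆ Set.Icc (0:ℝ) 1, MeasurableSet E →
      ∃ xE : X, ∀ x' : X →L[ℝ] ℝ, x' xE = ∫ t in E, x' (f t) := by
  classical
  -- μ01.restrict E = volume.restrict E for measurable E ⊆ [0,1]
  -- Part 1: integrability on [0,1]
  have hint1 : ∀ x' : X →L[ℝ] ℝ, MeasureTheory.IntegrableOn
      (fun t => x' (f t)) (Set.Icc 0 1) volume := by
    intro x'
    have h1 := hΓpet.1 x'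
    have h2 := hΓpet.1 (-x')
    have hmeas : AEStronglyMeasurable (fun t => x' (f t)) (volume.restrict (Set.Icc 0 1)) :=
      (hscal x').aestronglyMeasurable
    refine (h1.sup h2).mono' hmeas ?_
    have hmem : ∀ᵐ t ∂(volume.restrict (Set.Icc (0:ℝ) 1)), t ∈ Set.Icc (0:ℝ) 1 :=
      ae_restrict_mem measurableSet_Icc
    have hsel' : ∀ᵐ t ∂(volume.restrict (Set.Icc (0:ℝ) 1)), f t ∈ Γ t := hsel
    filter_upwards [hmem, hsel'] with t ht hft
    have hck := hΓ t ht
    have hbdd : ∀ y' : X →L[ℝ] ℝ, y' (f t) ≤ suppFn (⇑y') (Γ t) := by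
      intro y'
      refine le_csSup ((hck.2.1.image y'.continuous).bddAbove) ⟨f t, hft, rfl⟩
    have h1' := hbdd x'
    have h2' := hbdd (-x')
    simp only [ContinuousLinearMap.neg_apply] at h2'
    rw [Real.norm_eq_abs, abs_le]
    constructor
    · simp only [Pi.sup_apply]
      have := le_max_right (suppFn (⇑x') (Γ t)) (suppFn (⇑(-x')) (Γ t))
      have h3 : -(suppFn (⇑(-x')) (Γ t)) ≤ x' (f t) := by linarith
      calc -(suppFn (⇑x') (Γ t) ⊔ suppFn (⇑(-x')) (Γ t))
          ≤ -(suppFn (⇑(-x')) (Γ t)) := by simp [le_max_right]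
        _ ≤ x' (f t) := h3
    · simp only [Pi.sup_apply]
      exact le_trans h1' (le_max_left _ _)
  refine ⟨hint1, ?_⟩
  intro E hEsub hE
  obtain ⟨C, hCck, hC⟩ := hΓpet.2 E hEsub hE
  have hrestr : μ01.restrict E = volume.restrict E := by
    rw [μ01, Measure.restrict_restrict hE, Set.inter_eq_left.mpr hEsub]
  have hselE : ∀ᵐ t ∂(volume.restrict E), f t ∈ Γ t := by
    rw [← hrestr]; exact ae_restrict_of_ae hsel
  have hmemE : ∀ᵐ t ∂(volume.restrict E), t ∈ E := ae_restrict_mem hE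
  have hintE : ∀ x' : X →L[ℝ] ℝ, MeasureTheory.IntegrableOn
      (fun t => x' (f t)) E volume := fun x' => (hint1 x').mono_set hEsub
  -- key inequality: ∫_E x'(f) ≤ σ(x', C)
  have hLle : ∀ x' : X →L[ℝ] ℝ, (∫ t in E, x' (f t)) ≤ suppFn (⇑x') C := by
    intro x'
    rw [hC x']
    refine integral_mono_ae (hintE x') ((hΓpet.1 x').mono_set hEsub) ?_
    filter_upwards [hselE, hmemE] with t hft htE
    exact le_csSup (((hΓ t (hEsub htE)).2.1.image x'.continuous).bddAbove) ⟨f t, hft, rfl⟩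
  -- finite-dimensional step
  have hfin : ∀ (n : ℕ) (g : Fin n → (X →L[ℝ] ℝ)),
      ∃ x ∈ C, ∀ j, g j x = ∫ t in E, g j (f t) := by
    intro n g
    set T : X →L[ℝ] (Fin n → ℝ) := ContinuousLinearMap.pi g with hT
    set K : Set (Fin n → ℝ) := T '' C with hK
    have hKc : IsCompact K := hCck.2.1.image T.continuous
    have hKconv : Convex ℝ K := hCck.2.2.linear_image (T : X →ₗ[ℝ] (Fin n → ℝ))
    set Lvec : Fin n → ℝ := fun j => ∫ t in E, g j (f t) with hLvec
    have hmem : Lvec ∈ K := by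
      by_contra hnot
      obtain ⟨φ, u, hu1, hu2⟩ :=
        geometric_hahn_banach_closed_point hKconv hKc.isClosed hnot
      set c : Fin n → ℝ := fun j => φ (Pi.single j 1) with hc
      have hφ : ∀ y : Fin n → ℝ, φ y = ∑ j, c j * y j := by
        intro y
        conv_lhs => rw [← Finset.univ_sum_single y]
        rw [map_sum]
        refine Finset.sum_congr rfl fun j _ => ?_
        have : Pi.single j (y j) = (y j) • (Pi.single j 1 : Fin n → ℝ) := by
          rw [← Pi.single_smul, smul_eq_mul, mul_one]
        rw [this, _root_.map_smul, smul_eq_mul, mul_comm]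
      set z' : X →L[ℝ] ℝ := ∑ j, c j • g j with hz'
      have hz'app : ∀ x : X, z' x = φ (T x) := by
        intro x
        rw [hφ]
        simp [hz', ContinuousLinearMap.sum_apply, ContinuousLinearMap.smul_apply,
          smul_eq_mul, T]
      have hφL : φ Lvec = ∫ t in E, z' (f t) := by
        rw [hφ]
        have : ∀ t, z' (f t) = ∑ j, c j * g j (f t) := by
          intro t
          simp [hz', ContinuousLinearMap.sum_apply, ContinuousLinearMap.smul_apply,
            smul_eq_mul]
        rw [show (fun t => z' (f t)) = fun t => ∑ j, c j * g j (f t) from funext this]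
        rw [integral_finset_sum]
        · refine Finset.sum_congr rfl fun j _ => ?_
          rw [integral_const_mul]
        · intro j _
          exact (hintE (g j)).const_mul (c j)
      have hle1 : (∫ t in E, z' (f t)) ≤ suppFn (⇑z') C := hLle z'
      have hle2 : suppFn (⇑z') C ≤ u := by
        refine csSup_le ((hCck.1.image _)) ?_
        rintro r ⟨x, hx, rfl⟩
        rw [hz'app x]
        exact le_of_lt (hu1 (T x) ⟨x, hx, rfl⟩)
      rw [hφL] at hu2
      linarith
    obtain ⟨x, hx, hTx⟩ := hmem
    refine ⟨x, hx, fun j => ?_⟩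
    have := congrFun hTx j
    simpa [T, ContinuousLinearMap.pi_apply] using this
  -- finite intersection property over all functionals
  set S : (X →L[ℝ] ℝ) → Set X := fun x' => {x | x' x = ∫ t in E, x' (f t)} with hS
  have hSclosed : ∀ x', IsClosed (S x') := fun x' =>
    isClosed_eq x'.continuous continuous_const
  have hfip : ∀ u : Finset (X →L[ℝ] ℝ), (C ∩ ⋂ x' ∈ u, S x').Nonempty := by
    intro u
    obtain ⟨x, hx, hxj⟩ := hfin u.card (fun j => (u.equivFin.symm j : X →L[ℝ] ℝ))
    refine ⟨x, hx, ?_⟩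
    simp only [Set.mem_iInter]
    intro x' hx'
    have := hxj (u.equivFin ⟨x', hx'⟩)
    simpa [hS] using this
  obtain ⟨x, -, hx2⟩ := hCck.2.1.inter_iInter_nonempty S hSclosed hfip
  refine ⟨x, fun x' => ?_⟩
  exact Set.mem_iInter.mp hx2 x'
end

section
/- Let X be a Fréchet space, x* ∈ X*, and Γ: [0,1] → ck(X) a scalarly measurable multifunction with nonempty compact convex values. Define G(t) = {x ∈ Γ(t) : ⟨x*, x⟩ = σ(x*, Γ(t))}. Then G(t) is a nonempty compact convex subset of X for each t, and G is scalarly measurable. -/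
open MeasureTheory Set Filter Topology Pointwise

section AuxStmt17

variable {X : Type*} [AddCommGroup X] [Module ℝ X] [UniformSpace X]
  [IsUniformAddGroup X] [ContinuousSMul ℝ X]

set_option linter.unusedSectionVars false

theorem aux_face (x' : X →L[ℝ] ℝ) (C : Set X) (hC : IsCK C) :
    IsCK {x ∈ C | x' x = suppFn (⇑x') C} := by
  obtain ⟨hne, hcomp, hconv⟩ := hC
  obtain ⟨z, hz, hzmax⟩ := hcomp.exists_isMaxOn hne x'.continuous.continuousOn
  have hgr : IsGreatest ((⇑x') '' C) (x' z) :=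
    ⟨Set.mem_image_of_mem _ hz, by rintro b ⟨w, hw, rfl⟩; exact hzmax hw⟩
  have hs : suppFn (⇑x') C = x' z := hgr.csSup_eq
  refine ⟨⟨z, hz, hs.symm⟩, ?_, ?_⟩
  · have : {x ∈ C | x' x = suppFn (⇑x') C} = C ∩ (⇑x') ⁻¹' {suppFn (⇑x') C} := by
      ext w; simp [Set.mem_sep_iff]
    rw [this]
    exact hcomp.inter_right (isClosed_singleton.preimage x'.continuous)
  · exact hconv.inter (convex_hyperplane (IsLinearMap.mk x'.map_add x'.map_smul) _)

theorem aux_eq (x' y' : X →L[ℝ] ℝ) (C : Set X) (hC : IsCK C) :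
    suppFn (⇑y') {x ∈ C | x' x = suppFn (⇑x') C} =
      ⨅ n : ℕ, (suppFn (⇑((n : ℕ) • x' + y')) C - n * suppFn (⇑x') C) := by
  obtain ⟨hne, hcomp, hconv⟩ := hC
  set s := suppFn (⇑x') C with hs_def
  set F := {x ∈ C | x' x = s} with hF_def
  have hFck : IsCK F := aux_face x' C ⟨hne, hcomp, hconv⟩
  have hbddC : ∀ f : X →L[ℝ] ℝ, BddAbove ((⇑f) '' C) := fun f =>
    (hcomp.image f.continuous).bddAbove
  have hle : ∀ f : X →L[ℝ] ℝ, ∀ x ∈ C, f x ≤ suppFn (⇑f) C := fun f x hx =>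
    le_csSup (hbddC f) (Set.mem_image_of_mem _ hx)
  set g : ℕ → ℝ := fun n => suppFn (⇑((n : ℕ) • x' + y')) C - n * s with hg_def
  have happly : ∀ (n : ℕ) (x : X), ((n : ℕ) • x' + y') x = n * x' x + y' x := by
    intro n x
    simp [ContinuousLinearMap.add_apply, nsmul_eq_mul]
  -- lower bound: suppFn y' F ≤ g n for every n
  have hlow : ∀ n : ℕ, suppFn (⇑y') F ≤ g n := by
    intro n
    apply csSup_le (hFck.1.image _)
    rintro b ⟨x, ⟨hxC, hxs⟩, rfl⟩
    have h1 : (n : ℝ) * x' x + y' x ≤ suppFn (⇑((n : ℕ) • x' + y')) C := by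
      rw [← happly]; exact hle _ x hxC
    have : (n : ℝ) * s + y' x ≤ suppFn (⇑((n : ℕ) • x' + y')) C := by rw [← hxs]; exact h1
    simp only [hg_def]; linarith
  have hbddg : BddBelow (Set.range g) := ⟨suppFn (⇑y') F, by rintro b ⟨n, rfl⟩; exact hlow n⟩
  set L := ⨅ n : ℕ, g n with hL_def
  set M := suppFn (⇑y') C with hM_def
  have hg0 : g 0 = M := by simp [hg_def, hM_def]
  have hLM : L ≤ M := hg0 ▸ ciInf_le hbddg 0
  refine le_antisymm (le_ciInf hlow) ?_
  -- upper bound: L ≤ suppFn y' F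
  set S : ℕ → Set X := fun n => {x | s - (M - L + 1) / ((n : ℝ) + 1) ≤ x' x} ∩ {x | L ≤ y' x}
    with hS_def
  have hSclosed : ∀ n, IsClosed (S n) :=
    fun n => (isClosed_le continuous_const x'.continuous).inter
      (isClosed_le continuous_const y'.continuous)
  have hmono : ∀ m n : ℕ, m ≤ n → S n ⊆ S m := by
    intro m n hmn x hx
    have hx1 : s - (M - L + 1) / ((n:ℝ) + 1) ≤ x' x := hx.1
    have h1 : (0:ℝ) < (m : ℝ) + 1 := by positivity
    have h2 : (m : ℝ) + 1 ≤ (n : ℝ) + 1 := by exact_mod_cast by omega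
    have h3 : (0:ℝ) ≤ M - L + 1 := by linarith
    have h4 : (M - L + 1) / ((n:ℝ) + 1) ≤ (M - L + 1) / ((m:ℝ) + 1) := by
      gcongr
    exact ⟨show s - (M - L + 1) / ((m:ℝ) + 1) ≤ x' x by linarith, hx.2⟩
  -- each C ∩ S n is nonempty
  have hpoint : ∀ n : ℕ, (C ∩ S n).Nonempty := by
    intro n
    obtain ⟨x, hxC, hxmax⟩ := hcomp.exists_isMaxOn hne
      (((n + 1 : ℕ) • x' + y').continuous.continuousOn)
    have hgr : IsGreatest ((⇑((n + 1 : ℕ) • x' + y')) '' C) (((n + 1 : ℕ) • x' + y') x) :=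
      ⟨Set.mem_image_of_mem _ hxC, by rintro b ⟨w, hw, rfl⟩; exact hxmax hw⟩
    have hval0 : suppFn (⇑((n + 1 : ℕ) • x' + y')) C = ((n + 1 : ℕ) • x' + y') x :=
      hgr.csSup_eq
    have hval : suppFn (⇑((n + 1 : ℕ) • x' + y')) C = ((n:ℝ) + 1) * x' x + y' x := by
      rw [hval0, happly]; push_cast; ring
    have hgL : L ≤ g (n + 1) := ciInf_le hbddg (n + 1)
    have hgval : g (n + 1) = ((n:ℝ) + 1) * x' x + y' x - ((n:ℝ) + 1) * s := by
      simp only [hg_def, hval]; push_cast; ring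
    have hxs : x' x ≤ s := hle x' x hxC
    have hxM : y' x ≤ M := hle y' x hxC
    have hnpos : (0:ℝ) < (n:ℝ) + 1 := by positivity
    have hyL : L ≤ y' x := by
      nlinarith [hgL, hgval, mul_nonneg hnpos.le (sub_nonneg.2 hxs)]
    have hxlb : s - (M - L + 1) / ((n:ℝ) + 1) ≤ x' x := by
      have h5 : (s - x' x) * ((n:ℝ) + 1) ≤ M - L + 1 := by nlinarith [hgL, hgval]
      have h6 := (le_div_iff₀ hnpos).2 h5
      linarith
    exact ⟨x, hxC, hxlb, hyL⟩
  have hinter : (C ∩ ⋂ n, S n).Nonempty := by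
    apply hcomp.inter_iInter_nonempty S hSclosed
    intro u
    rcases u.eq_empty_or_nonempty with rfl | hu
    · simpa using hne
    · obtain ⟨x, hxC, hxS⟩ := hpoint (u.sup id)
      exact ⟨x, hxC, Set.mem_biInter fun n hn => hmono n _ (Finset.le_sup (f := id) hn) hxS⟩
  obtain ⟨x, hxC, hxS⟩ := hinter
  have hxs : s ≤ x' x := by
    have hbound : ∀ n : ℕ, s - x' x ≤ (M - L + 1) / ((n:ℝ) + 1) := by
      intro n
      have h7 : s - (M - L + 1) / ((n:ℝ) + 1) ≤ x' x := (Set.mem_iInter.1 hxS n).1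
      linarith
    have htend : Tendsto (fun n : ℕ => (M - L + 1) / ((n:ℝ) + 1)) atTop (𝓝 0) := by
      have h1 := tendsto_const_div_atTop_nhds_zero_nat (M - L + 1)
      have h2 := h1.comp (tendsto_add_atTop_nat 1)
      have h3 : (fun n : ℕ => (M - L + 1) / ((n:ℝ) + 1)) =
          ((fun n : ℕ => (M - L + 1) / (n:ℝ)) ∘ fun a => a + 1) := by
        funext n; simp only [Function.comp]; push_cast; ring_nf
      rw [h3]; exact h2
    have := ge_of_tendsto htend (Filter.Eventually.of_forall hbound)
    linarith
  have hxF : x ∈ F := ⟨hxC, le_antisymm (hle x' x hxC) hxs⟩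
  have hyL : L ≤ y' x := (Set.mem_iInter.1 hxS 0).2
  calc L ≤ y' x := hyL
    _ ≤ suppFn (⇑y') F := le_csSup ((hbddC y').mono (Set.image_mono (Set.sep_subset _ _)))
        (Set.mem_image_of_mem _ hxF)

end AuxStmt17

/-- for `x* ∈ X*` and a scalarly measurable `Γ : [0,1] → ck(X)`, the
face multifunction `G t = {x ∈ Γ t : ⟨x*, x⟩ = σ(x*, Γ t)}` has nonempty compact convex
values and is scalarly measurable. -/
theorem stmt17 {X : Type*} [AddCommGroup X] [Module ℝ X] [UniformSpace X]
    [IsUniformAddGroup X] [ContinuousSMul ℝ X] [CompleteSpace X]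
    (p : ℕ → Seminorm ℝ X) (hp : WithSeminorms p) (hpmono : Monotone p)
    (x' : X →L[ℝ] ℝ)
    (Γ : ℝ → Set X) (hΓ : ∀ t ∈ Set.Icc (0:ℝ) 1, IsCK (Γ t))
    (hscal : ∀ y' : X →L[ℝ] ℝ, AEMeasurable (fun t => suppFn (⇑y') (Γ t)) μ01) :
    (∀ t ∈ Set.Icc (0:ℝ) 1, IsCK {x ∈ Γ t | x' x = suppFn (⇑x') (Γ t)}) ∧
    ∀ y' : X →L[ℝ] ℝ,
      AEMeasurable (fun t => suppFn (⇑y') {x ∈ Γ t | x' x = suppFn (⇑x') (Γ t)}) μ01 := by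
  refine ⟨fun t ht => aux_face x' (Γ t) (hΓ t ht), fun y' => ?_⟩
  have hmeas : AEMeasurable
      (fun t => ⨅ n : ℕ,
        (suppFn (⇑((n : ℕ) • x' + y')) (Γ t) - n * suppFn (⇑x') (Γ t))) μ01 :=
    AEMeasurable.iInf fun n => ((hscal ((n : ℕ) • x' + y')).sub ((hscal x').const_mul n))
  refine hmeas.congr ?_
  have hmem : ∀ᵐ t ∂μ01, t ∈ Set.Icc (0:ℝ) 1 := ae_restrict_mem measurableSet_Icc
  filter_upwards [hmem] with t ht
  exact (aux_eq x' y' (Γ t) (hΓ t ht)).symm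
end
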